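/- arXiv:2212.06988 — 2 statements merged into one kernel-verified Lean document; each statement's English description precedes it below -/
import Mathlib

section
/- With learning rates α_t = (H+1)/(H+t), the weights α_t^i := α_i ∏_{j=i+1}^t (1 − α_j) satisfy ∑_{i=1}^t α_t^i / √i ≤ 2/√t for every t ≥ 1. -/
/-- For Q-learning step sizes `α_t = (H+1)/(H+t)`, the weights
`α_t^i = α_i ∏_{j=i+1}^t (1 - α_j)` satisfy
`∑_{i=1}^t α_t^i / √i ≤ 2 / √t` for every `t ≥ 1`. -/
theorem qlearning_weights_sum_div_sqrt (H : ℕ) (hH : 1 ≤ H) (t : ℕ) (ht : 1 ≤ t) :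
    ∑ i ∈ Finset.Icc 1 t,
      (((H : ℝ) + 1) / ((H : ℝ) + i) *
        ∏ j ∈ Finset.Icc (i + 1) t, (1 - ((H : ℝ) + 1) / ((H : ℝ) + j))) / Real.sqrt i
    ≤ 2 / Real.sqrt t := by
  induction t, ht using Nat.le_induction with
  | base =>
    have h0 : ((H : ℝ) + 1) ≠ 0 := by positivity
    simp [Finset.Icc_self, Real.sqrt_one, div_self h0,
      Finset.Icc_eq_empty (by omega : ¬ (1 + 1 ≤ 1))]
  | succ t ht ih =>
    have hsplit : ∀ i ∈ Finset.Icc 1 t,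
        (((H : ℝ) + 1) / ((H : ℝ) + i) *
          ∏ j ∈ Finset.Icc (i + 1) (t+1), (1 - ((H : ℝ) + 1) / ((H : ℝ) + j))) / Real.sqrt i
        = (1 - ((H : ℝ) + 1) / ((H : ℝ) + ((t:ℝ)+1))) *
          ((((H : ℝ) + 1) / ((H : ℝ) + i) *
          ∏ j ∈ Finset.Icc (i + 1) t, (1 - ((H : ℝ) + 1) / ((H : ℝ) + j))) / Real.sqrt i) := by
      intro i hi
      simp only [Finset.mem_Icc] at hi
      rw [Finset.prod_Icc_succ_top (by omega : i + 1 ≤ t + 1)]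
      push_cast
      ring
    rw [Finset.sum_Icc_succ_top (by omega : 1 ≤ t + 1),
      Finset.sum_congr rfl hsplit, ← Finset.mul_sum,
      Finset.Icc_eq_empty (by omega : ¬ (t + 1 + 1 ≤ t + 1))]
    set x := Real.sqrt t with hxdef
    set y := Real.sqrt ((t:ℕ)+1 : ℕ) with hydef
    have hx : 0 < x := Real.sqrt_pos.mpr (by positivity)
    have hy : 0 < y := Real.sqrt_pos.mpr (by positivity)
    have hx2 : x ^ 2 = t := Real.sq_sqrt (by positivity)
    have hy2 : y ^ 2 = (t : ℝ) + 1 := by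
      rw [hydef]; push_cast; exact Real.sq_sqrt (by positivity)
    have key : 2 * x * y ≤ (H : ℝ) + 2 * t + 1 := by
      nlinarith [two_mul_le_add_sq x y, hH]
    have h1a : (0:ℝ) ≤ 1 - ((H : ℝ) + 1) / ((H : ℝ) + ((t:ℝ)+1)) := by
      rw [sub_nonneg, div_le_one (by positivity)]
      linarith
    have hcast : ((((t:ℕ)+1 : ℕ)) : ℝ) = (t:ℝ) + 1 := by push_cast; ring
    rw [hcast]
    calc (1 - ((H : ℝ) + 1) / ((H : ℝ) + ((t:ℝ)+1))) *
          (∑ i ∈ Finset.Icc 1 t,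
            (((H : ℝ) + 1) / ((H : ℝ) + i) *
            ∏ j ∈ Finset.Icc (i + 1) t, (1 - ((H : ℝ) + 1) / ((H : ℝ) + j))) / Real.sqrt i)
          + (((H : ℝ) + 1) / ((H : ℝ) + ((t:ℝ)+1)) * ∏ j ∈ (∅ : Finset ℕ),
              (1 - ((H : ℝ) + 1) / ((H : ℝ) + j))) / y
        ≤ (1 - ((H : ℝ) + 1) / ((H : ℝ) + ((t:ℝ)+1))) * (2 / x)
          + (((H : ℝ) + 1) / ((H : ℝ) + ((t:ℝ)+1)) * 1) / y := by
          rw [Finset.prod_empty]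
          gcongr
      _ ≤ 2 / y := by
          have hd : (0:ℝ) < (H : ℝ) + ((t:ℝ)+1) := by positivity
          rw [← sub_nonneg]
          have hexp : 2 / y - ((1 - ((H : ℝ) + 1) / ((H : ℝ) + ((t:ℝ)+1))) * (2 / x)
              + (((H : ℝ) + 1) / ((H : ℝ) + ((t:ℝ)+1)) * 1) / y)
              = (((H : ℝ) + 2 * t + 1) - 2 * x * y) / (((H : ℝ) + ((t:ℝ)+1)) * y) := by
            rw [← hx2]
            field_simp
            ring
          rw [hexp]
          apply div_nonneg (by linarith) (by positivity)
end

section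
/- For step sizes α_t = (H+1)/(H+t), the weights α_t^i satisfy ∑_{t=i}^∞ α_t^i ≤ 1 + 1/H for every i ≥ 1. -/
/-- **Geometric-tail property of the Q-learning step-size weights.**
With `α_t = (H+1)/(H+t)` and `α_t^i = α_i ∏_{j=i+1}^t (1-α_j)`,
for every `i ≥ 1` we have `∑_{t=i}^∞ α_t^i ≤ 1 + 1/H`. -/
theorem qlearning_stepsize_weight_tail_sum (H : ℕ) (hH : 1 ≤ H)
    (i : ℕ) (hi : 1 ≤ i) :
    ∑' k : ℕ,
        ((H : ℝ) + 1) / ((H : ℝ) + i) *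
          ∏ j ∈ Finset.Icc (i + 1) (i + k), (1 - ((H : ℝ) + 1) / ((H : ℝ) + j))
      ≤ 1 + 1 / (H : ℝ) := by
  have hH' : (1 : ℝ) ≤ H := by exact_mod_cast hH
  have hi' : (1 : ℝ) ≤ i := by exact_mod_cast hi
  have hHpos : (0 : ℝ) < H := lt_of_lt_of_le one_pos hH'
  have hHi : (0 : ℝ) < (H : ℝ) + i := by linarith
  set P : ℕ → ℝ := fun k =>
    ∏ j ∈ Finset.Icc (i + 1) (i + k), (1 - ((H : ℝ) + 1) / ((H : ℝ) + j)) with hP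
  have hPnn : ∀ k, 0 ≤ P k := by
    intro k
    apply Finset.prod_nonneg
    intro j hj
    have hj' : i + 1 ≤ j := (Finset.mem_Icc.mp hj).1
    have hj2 : (2 : ℝ) ≤ j := by
      have : 2 ≤ j := le_trans (by omega) hj'
      exact_mod_cast this
    have hd : (0 : ℝ) < (H : ℝ) + j := by linarith
    have : ((H : ℝ) + 1) / ((H : ℝ) + j) ≤ 1 := by
      rw [div_le_one hd]; linarith
    linarith
  have hPsucc : ∀ k, P (k + 1) = P k * (1 - ((H : ℝ) + 1) / ((H : ℝ) + (i + k + 1))) := by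
    intro k
    have h1 : i + 1 ≤ i + (k + 1) := by omega
    simp only [hP]
    rw [show i + (k + 1) = (i + k) + 1 from rfl, Finset.prod_Icc_succ_top (by omega)]
    push_cast
    ring_nf
  -- partial sum formula
  have key : ∀ N, ∑ k ∈ Finset.range N,
      ((H : ℝ) + 1) / ((H : ℝ) + i) * P k
      = (1 + 1 / (H : ℝ)) * (1 - P N * (((H : ℝ) + i + N) / ((H : ℝ) + i))) := by
    intro N
    induction N with
    | zero =>
        simp [hP, div_self (ne_of_gt hHi)]
    | succ N ih =>
        rw [Finset.sum_range_succ, ih, hPsucc N]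
        have hd : ((H : ℝ) + (i + N + 1)) ≠ 0 := by
          nlinarith
        field_simp
        push_cast
        ring
  apply Real.tsum_le_of_sum_range_le
  · intro k
    exact mul_nonneg (by positivity) (hPnn k)
  · intro N
    rw [key N]
    have : 0 ≤ P N * (((H : ℝ) + i + N) / ((H : ℝ) + i)) :=
      mul_nonneg (hPnn N) (by positivity)
    have h1 : (0 : ℝ) < 1 + 1 / H := by positivity
    nlinarith
end
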